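/- Let q = p^a be an odd prime power. Then the irreducible cyclic code C((q+1)/2, q²) over F_p has exactly two nonzero weights, namely w = (p−1)p^{a−1} with frequency 2(q−1), and 2w = 2(p−1)p^{a−1} with frequency (q−1)². -/

import Mathlib

open scoped BigOperators

/-- `Ψ_b(x) = x^(b-1) + ⋯ + x + 1`. -/
def psi (b x : ℕ) : ℕ := ∑ i ∈ Finset.range b, x ^ i

/-- `n` is a primitive divisor of `p^m - 1`. -/
def IsPrimitiveDivisor (n p m : ℕ) : Prop :=
  n ∣ p ^ m - 1 ∧ ∀ t : ℕ, 1 ≤ t → t < m → ¬ n ∣ p ^ t - 1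

/-- The codeword `c_γ` of the irreducible cyclic code `C(k,q)` of length `n`;
its `i`-th coordinate is `Tr_{q/p}(γ ω^(k i))`. -/
noncomputable def cycWord (p : ℕ) (F : Type) [Field F] [Fintype F] [Algebra (ZMod p) F]
    (ω : F) (k n : ℕ) (γ : F) : Fin n → ZMod p :=
  fun i => Algebra.trace (ZMod p) F (γ * ω ^ (k * (i : ℕ)))

/-- The irreducible cyclic code `C(k,q)` as a finite set of codewords. -/
noncomputable def cycCode (p : ℕ) (F : Type) [Field F] [Fintype F] [Algebra (ZMod p) F]
    (ω : F) (k n : ℕ) : Finset (Fin n → ZMod p) :=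
  Finset.image (cycWord p F ω k n) Finset.univ

/-- Hamming weight of a codeword: the number of nonzero coordinates. -/
def wt {p n : ℕ} (c : Fin n → ZMod p) : ℕ :=
  (Finset.univ.filter fun i => c i ≠ 0).card

/-- `A_w`: the number of codewords of weight `w` in `C(k,q)`. -/
noncomputable def freq (p : ℕ) (F : Type) [Field F] [Fintype F] [Algebra (ZMod p) F]
    (ω : F) (k n w : ℕ) : ℕ :=
  ((cycCode p F ω k n).filter fun c => wt c = w).card


open Finset Polynomial


lemma zmodp_pow_pow (p : ℕ) [Fact p.Prime] (c : ZMod p) (j : ℕ) : c ^ p ^ j = c := by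
  induction j with
  | zero => simp
  | succ j ih => rw [pow_succ, pow_mul, ih, ZMod.pow_card]

lemma roots_card_le {E : Type} [Field E] [DecidableEq E] (f : E[X]) (hf : f ≠ 0)
    (s : Finset E) (h : ∀ x ∈ s, f.eval x = 0) : s.card ≤ f.natDegree := by
  have hsub : s ⊆ f.roots.toFinset := by
    intro x hx
    simp [Multiset.mem_toFinset, mem_roots, hf, h x hx]
  calc s.card ≤ f.roots.toFinset.card := Finset.card_le_card hsub
    _ ≤ Multiset.card f.roots := Multiset.toFinset_card_le _
    _ ≤ f.natDegree := f.card_roots'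

/-- count of roots of `x^b + c*x` is at most `b`. -/
lemma card_le_pow_lin {E : Type} [Field E] [DecidableEq E] (b : ℕ) (hb : 2 ≤ b) (c : E)
    (s : Finset E) (h : ∀ x ∈ s, x ^ b + c * x = 0) : s.card ≤ b := by
  set f : E[X] := X ^ b + C c * X with hf
  have hdeg : f.natDegree = b := by
    rw [hf, natDegree_add_eq_left_of_natDegree_lt]
    · exact natDegree_X_pow b
    · rw [natDegree_X_pow]
      calc (C c * X).natDegree ≤ 1 := by
            rcases eq_or_ne c 0 with hc | hc
            · simp [hc]
            · rw [natDegree_C_mul hc, natDegree_X]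
        _ < b := by omega
  have hf0 : f ≠ 0 := by
    intro h0
    rw [h0, natDegree_zero] at hdeg
    omega
  have := roots_card_le f hf0 s (fun x hx => by simp [hf, h x hx])
  omega

lemma trace_formula (p m : ℕ) (hp : p.Prime) (E : Type) [Field E] [Fintype E]
    [Algebra (ZMod p) E] (hE : Fintype.card E = p ^ m) (y : E) :
    algebraMap (ZMod p) E (Algebra.trace (ZMod p) E y) = ∑ j ∈ Finset.range m, y ^ p ^ j := by
  classical
  haveI : Fact p.Prime := ⟨hp⟩
  haveI : CharP E p := charP_of_injective_algebraMap' (ZMod p) (A := E) p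
  have hfr : Module.finrank (ZMod p) E = m := by
    have h1 : Fintype.card E = p ^ Module.finrank (ZMod p) E := by
      have := Module.card_eq_pow_finrank (K := ZMod p) (V := E)
      rwa [ZMod.card] at this
    exact Nat.pow_right_injective hp.two_le (h1.symm.trans hE)
  have hcomm : ∀ (j : ℕ) (c : ZMod p),
      iterateFrobeniusEquiv E p j (algebraMap (ZMod p) E c) = algebraMap (ZMod p) E c := by
    intro j c
    rw [iterateFrobeniusEquiv_def, ← map_pow, zmodp_pow_pow]
  let σ : ℕ → (E ≃ₐ[ZMod p] E) := fun j =>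
    { iterateFrobeniusEquiv E p j with commutes' := hcomm j }
  have hσ : ∀ (j : ℕ) (x : E), σ j x = x ^ p ^ j := fun j x => rfl
  have main : ∀ i j : ℕ, i < j → j < m → σ i ≠ σ j := by
    intro i j hlt hj hij
    have key : ∀ x : E, x ^ p ^ (j - i) + (-1) * x = 0 := by
      intro x
      have h1 : x ^ p ^ i = x ^ p ^ j := by
        have := congrArg (fun f : E ≃ₐ[ZMod p] E => f x) hij
        simpa [hσ] using this
      have h2 : (x ^ p ^ (j - i)) ^ p ^ i = x ^ p ^ i := by
        rw [← pow_mul, ← pow_add, h1]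
        congr 2
        omega
      have hfrobinj : Function.Injective (fun z : E => z ^ p ^ i) := by
        intro z w hzw
        have hz : (z - w) ^ p ^ i = 0 := by
          rw [sub_pow_char_pow]
          simpa using sub_eq_zero_of_eq hzw
        exact sub_eq_zero.mp (pow_eq_zero_iff (pow_pos hp.pos i).ne' |>.mp hz)
      have := hfrobinj h2
      rw [this]; ring
    have h2b : 2 ≤ p ^ (j - i) := by
      calc 2 ≤ p := hp.two_le
      _ = p ^ 1 := (pow_one p).symm
      _ ≤ p ^ (j - i) := Nat.pow_le_pow_right hp.pos (by omega)
    have hfle := card_le_pow_lin (p ^ (j - i)) h2b (-1 : E) Finset.univ (fun x _ => key x)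
    rw [Finset.card_univ, hE] at hfle
    have : p ^ (j - i) < p ^ m := Nat.pow_lt_pow_right hp.one_lt (by omega)
    omega
  have hinj : Set.InjOn σ (Finset.range m) := by
    intro i hi j hj hij
    simp only [coe_range, Set.mem_Iio] at hi hj
    by_contra hne
    rcases Nat.lt_or_ge i j with h | h
    · exact main i j h hj hij
    · exact main j i (by omega) hi hij.symm
  have hcard : Fintype.card (E ≃ₐ[ZMod p] E) = m := by
    rw [← Nat.card_eq_fintype_card, IsGalois.card_aut_eq_finrank, hfr]
  have himg : (Finset.range m).image σ = Finset.univ := by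
    apply Finset.eq_univ_of_card
    rw [Finset.card_image_of_injOn hinj, Finset.card_range, hcard]
  rw [trace_eq_sum_automorphisms, ← himg, Finset.sum_image (fun i hi j hj => hinj hi hj)]
  exact Finset.sum_congr rfl fun j _ => hσ j y

lemma card_fibers' {α β : Type} [DecidableEq β] (s : Finset α) (t : Finset β) (f : α → β)
    (hmem : ∀ x ∈ s, f x ∈ t) (y₀ : β)
    (h : ∀ y ∈ t, (s.filter fun x => f x = y).card = (s.filter fun x => f x = y₀).card) :
    s.card = t.card * (s.filter fun x => f x = y₀).card := by
  rw [Finset.card_eq_sum_card_fiberwise hmem, Finset.sum_congr rfl h, Finset.sum_const,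
    smul_eq_mul]

lemma AB_count (p a : ℕ) (hp : p.Prime) (ha : 0 < a) (E : Type) [Field E] [Fintype E]
    [DecidableEq E] [Algebra (ZMod p) E] (hE : Fintype.card E = (p ^ a) ^ 2) :
    (univ.filter fun x : E => x ^ p ^ a = x).card = p ^ a ∧
    (univ.filter fun x : E => x ^ p ^ a = -x).card = p ^ a := by
  haveI : Fact p.Prime := ⟨hp⟩
  haveI : CharP E p := charP_of_injective_algebraMap' (ZMod p) (A := E) p
  haveI : ExpChar E p := ExpChar.prime hp
  set q := p ^ a with hq
  have hq0 : 0 < q := pow_pos hp.pos a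
  have hq2 : 2 ≤ q := by
    calc 2 ≤ p := hp.two_le
    _ = p ^ 1 := (pow_one p).symm
    _ ≤ q := Nat.pow_le_pow_right hp.pos ha
  set φ : E → E := fun x => x ^ q - x with hφ
  have hadd : ∀ x y : E, φ (x + y) = φ x + φ y := by
    intro x y
    simp only [hφ, hq, add_pow_char_pow]
    ring
  have hsub : ∀ x y : E, φ (x - y) = φ x - φ y := by
    intro x y
    have := hadd (x - y) y
    rw [sub_add_cancel] at this
    linear_combination -this
  have hA_le : (univ.filter fun x : E => x ^ q = x).card ≤ q :=
    card_le_pow_lin q hq2 (-1 : E) _ (fun x hx => by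
      simp only [mem_filter] at hx
      rw [hx.2]; ring)
  have hB_le : (univ.filter fun x : E => x ^ q = -x).card ≤ q :=
    card_le_pow_lin q hq2 (1 : E) _ (fun x hx => by
      simp only [mem_filter] at hx
      rw [hx.2]; ring)
  have hpowcard : ∀ x : E, x ^ (q * q) = x := by
    intro x
    have := FiniteField.pow_card x
    rwa [hE, sq] at this
  have himgB : ∀ x : E, (φ x) ^ q = -(φ x) := by
    intro x
    simp only [hφ, hq]
    rw [sub_pow_char_pow, ← pow_mul, ← hq, hpowcard]
    ring
  set I : Finset E := univ.image φ with hI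
  have h0 : φ (0 : E) = 0 := by
    simp only [hφ]
    rw [zero_pow hq0.ne', sub_zero]
  -- all fibers over I have the same card as the fiber over 0
  have hfib : ∀ y ∈ I, (univ.filter fun x : E => φ x = y).card =
      (univ.filter fun x : E => φ x = 0).card := by
    intro y hy
    obtain ⟨x₁, -, hx₁⟩ := Finset.mem_image.mp hy
    apply Finset.card_bij' (fun x _ => x - x₁) (fun x _ => x + x₁)
    · intro x hx
      simp only [mem_filter, mem_univ, true_and] at hx ⊢
      rw [hsub, hx, hx₁, sub_self]
    · intro x hx
      simp only [mem_filter, mem_univ, true_and] at hx ⊢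
      rw [hadd, hx, hx₁, zero_add]
    · intro x _; ring
    · intro x _; ring
  have hkey : q ^ 2 = I.card * (univ.filter fun x : E => φ x = 0).card := by
    rw [← hE, ← Finset.card_univ]
    exact card_fibers' univ I φ (fun x _ => Finset.mem_image_of_mem φ (mem_univ x)) 0
      (by
        intro y hy
        exact hfib y hy)
  have hfib0 : (univ.filter fun x : E => φ x = 0) = (univ.filter fun x : E => x ^ q = x) := by
    apply Finset.filter_congr
    intro x _
    simp only [hφ, sub_eq_zero]
  have hIB : I ⊆ univ.filter fun x : E => x ^ q = -x := by
    intro y hy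
    obtain ⟨x, -, hx⟩ := Finset.mem_image.mp hy
    simp only [mem_filter, mem_univ, true_and]
    rw [← hx]
    exact himgB x
  have hI_le : I.card ≤ q := le_trans (Finset.card_le_card hIB) hB_le
  rw [hfib0] at hkey
  set cA := (univ.filter fun x : E => x ^ q = x).card
  have hcA : cA = q := by
    have h1 : q * q ≤ q * cA := by
      calc q * q = q ^ 2 := (sq q).symm
      _ = I.card * cA := hkey
      _ ≤ q * cA := Nat.mul_le_mul_right cA hI_le
    have := Nat.le_of_mul_le_mul_left h1 hq0
    omega
  have h3 : I.card * q = q * q := by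
    have h := hkey
    rw [hcA] at h
    rw [← sq]
    exact h.symm
  have hcI := Nat.eq_of_mul_eq_mul_right hq0 h3
  refine ⟨hcA, ?_⟩
  have := Finset.card_le_card hIB
  omega

lemma trace_count (p a : ℕ) (hp : p.Prime) (ha : 0 < a) (E : Type) [Field E] [Fintype E]
    [DecidableEq E] [Algebra (ZMod p) E] (hE : Fintype.card E = (p ^ a) ^ 2) (c : E) :
    (univ.filter fun x : E =>
        x ^ p ^ a = x ∧ x ≠ 0 ∧ Algebra.trace (ZMod p) E (c * x) ≠ 0).card
      = if c + c ^ p ^ a = 0 then 0 else (p - 1) * p ^ (a - 1) := by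
  haveI : Fact p.Prime := ⟨hp⟩
  haveI : CharP E p := charP_of_injective_algebraMap' (ZMod p) (A := E) p
  haveI : ExpChar E p := ExpChar.prime hp
  have hp2 := hp.two_le
  set q := p ^ a with hq
  have hq0 : 0 < q := pow_pos hp.pos a
  have hE2 : Fintype.card E = p ^ (2 * a) := by rw [hE, hq, ← pow_mul, Nat.mul_comm a 2]
  have hpowcard : ∀ x : E, x ^ (q * q) = x := by
    intro x
    have := FiniteField.pow_card x
    rwa [hE, sq] at this
  set T := c + c ^ q with hT
  have key : ∀ x : E, x ^ q = x →
      algebraMap (ZMod p) E (Algebra.trace (ZMod p) E (c * x))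
        = ∑ j ∈ Finset.range a, (T * x) ^ p ^ j := by
    intro x hx
    rw [trace_formula p (2 * a) hp E hE2 (c * x)]
    set g : ℕ → E := fun j => (c * x) ^ p ^ j with hg
    have h1 : ∑ j ∈ Finset.range (2 * a), g j
        = ∑ j ∈ Finset.range a, g j + ∑ j ∈ Finset.Ico a (2 * a), g j := by
      rw [Finset.range_eq_Ico, ← Finset.sum_Ico_consecutive g (Nat.zero_le a) (by omega),
        ← Finset.range_eq_Ico]
    have h2 : ∑ j ∈ Finset.Ico a (2 * a), g j = ∑ j ∈ Finset.range a, g (a + j) := by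
      rw [Finset.sum_Ico_eq_sum_range]
      apply Finset.sum_congr
      · congr 1
        omega
      · intro j _
        rfl
    rw [h1, h2, ← Finset.sum_add_distrib]
    apply Finset.sum_congr rfl
    intro j _
    have hgj : g (a + j) = (c ^ q * x) ^ p ^ j := by
      rw [hg]
      simp only
      rw [pow_add, pow_mul, ← hq, mul_pow, hx]
    rw [hgj, hg]
    simp only
    rw [← add_pow_char_pow]
    congr 1
    rw [hT]
    ring
  by_cases hT0 : T = 0
  · rw [if_pos hT0]
    rw [Finset.card_eq_zero, Finset.filter_eq_empty_iff]
    rintro x - ⟨hx, -, htr⟩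
    apply htr
    have h := key x hx
    rw [hT0, zero_mul] at h
    simp only [zero_pow (pow_pos hp.pos _).ne', Finset.sum_const_zero] at h
    exact (algebraMap (ZMod p) E).injective (by rw [h, map_zero])
  · rw [if_neg hT0]
    have hTA : T ^ q = T := by
      rw [hT, add_pow_char_pow, ← pow_mul, hpowcard, add_comm]
    have hz : ∃ z : E, z ^ q = z ∧ (∑ j ∈ Finset.range a, z ^ p ^ j) ≠ 0 := by
      by_contra hall
      push_neg at hall
      set P : E[X] := ∑ j ∈ Finset.range a, X ^ p ^ j with hP
      have hP1 : P.coeff 1 = 1 := by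
        rw [hP, finset_sum_coeff]
        rw [Finset.sum_eq_single_of_mem 0 (Finset.mem_range.mpr ha)]
        · simp
        · intro j _ hj
          rw [coeff_X_pow, if_neg]
          intro h1
          have : p ≤ p ^ j := by
            calc p = p ^ 1 := (pow_one p).symm
            _ ≤ p ^ j := Nat.pow_le_pow_right hp.pos (by omega)
          omega
      have hP0 : P ≠ 0 := fun h0 => by simp [h0] at hP1
      have hdeg : P.natDegree ≤ p ^ (a - 1) := by
        apply natDegree_sum_le_of_forall_le
        intro j hj
        rw [Finset.mem_range] at hj
        rw [natDegree_X_pow]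
        exact Nat.pow_le_pow_right hp.pos (by omega)
      have hroots := roots_card_le P hP0 (univ.filter fun x : E => x ^ q = x)
        (fun x hx => by
          simp only [mem_filter, mem_univ, true_and] at hx
          rw [hP]
          simp only [eval_finset_sum, eval_pow, eval_X]
          exact hall x hx)
      rw [(AB_count p a hp ha E hE).1] at hroots
      have : p ^ (a - 1) < p ^ a := Nat.pow_lt_pow_right hp.one_lt (by omega)
      omega
    obtain ⟨z, hzA, hzS⟩ := hz
    set x₀ := T⁻¹ * z with hx₀
    have hx₀A : x₀ ^ q = x₀ := by
      rw [hx₀, mul_pow, inv_pow, hTA, hzA]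
    have hTx₀ : T * x₀ = z := by
      rw [hx₀, ← mul_assoc, mul_inv_cancel₀ hT0, one_mul]
    have hs : Algebra.trace (ZMod p) E (c * x₀) ≠ 0 := by
      intro h0
      apply hzS
      have h := key x₀ hx₀A
      rw [h0, map_zero, hTx₀] at h
      exact h.symm
    set s := Algebra.trace (ZMod p) E (c * x₀) with hsdef
    -- trace scaling
    have hscale : ∀ (u : ZMod p) (x : E),
        Algebra.trace (ZMod p) E (c * (x + algebraMap (ZMod p) E u * x₀))
        = Algebra.trace (ZMod p) E (c * x) + u * s := by
      intro u x
      rw [mul_add, map_add]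
      congr 1
      have h1 : c * (algebraMap (ZMod p) E u * x₀) = u • (c * x₀) := by
        rw [Algebra.smul_def]
        ring
      rw [h1, map_smul, smul_eq_mul]
    have hmemA : ∀ (u : ZMod p) (x : E), x ^ q = x →
        (x + algebraMap (ZMod p) E u * x₀) ^ q = x + algebraMap (ZMod p) E u * x₀ := by
      intro u x hx
      rw [hq, add_pow_char_pow, mul_pow, ← map_pow, zmodp_pow_pow, ← hq, hx, hx₀A]
    -- fiber counting
    set Af := univ.filter (fun x : E => x ^ q = x) with hAf
    have hfib : ∀ t : ZMod p, (Af.filter fun x => Algebra.trace (ZMod p) E (c * x) = t).card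
        = (Af.filter fun x => Algebra.trace (ZMod p) E (c * x) = 0).card := by
      intro t
      apply Finset.card_bij' (fun x _ => x + algebraMap (ZMod p) E (-(t * s⁻¹)) * x₀)
        (fun x _ => x + algebraMap (ZMod p) E (t * s⁻¹) * x₀)
      · intro x hx
        simp only [hAf, Finset.mem_filter, Finset.mem_univ, true_and] at hx ⊢
        refine ⟨hmemA _ x hx.1, ?_⟩
        rw [hscale, hx.2, neg_mul, mul_assoc, inv_mul_cancel₀ hs, mul_one, add_neg_cancel]
      · intro x hx
        simp only [hAf, Finset.mem_filter, Finset.mem_univ, true_and] at hx ⊢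
        refine ⟨hmemA _ x hx.1, ?_⟩
        rw [hscale, hx.2, mul_assoc, inv_mul_cancel₀ hs, mul_one, zero_add]
      · intro x _
        simp only [map_neg]
        ring
      · intro x _
        simp only [map_neg]
        ring
    have hAfcard : Af.card = q := (AB_count p a hp ha E hE).1
    have hcount : Af.card = p * (Af.filter fun x => Algebra.trace (ZMod p) E (c * x) = 0).card := by
      have := card_fibers' Af univ (fun x => Algebra.trace (ZMod p) E (c * x))
        (fun x _ => Finset.mem_univ _) 0 (fun y _ => hfib y)
      rwa [Finset.card_univ, ZMod.card] at this
    set f0 := (Af.filter fun x => Algebra.trace (ZMod p) E (c * x) = 0).card with hf0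
    have hpq : p * p ^ (a - 1) = q := by
      rw [hq, ← pow_succ']
      congr 1
      omega
    have hf0val : f0 = p ^ (a - 1) := by
      apply Nat.eq_of_mul_eq_mul_left hp.pos
      rw [← hcount, hAfcard, hpq]
    -- rewrite the target filter
    have htarget : (univ.filter fun x : E =>
          x ^ q = x ∧ x ≠ 0 ∧ Algebra.trace (ZMod p) E (c * x) ≠ 0)
        = Af.filter fun x => Algebra.trace (ZMod p) E (c * x) ≠ 0 := by
      rw [hAf, Finset.filter_filter]
      apply Finset.filter_congr
      intro x _
      constructor
      · rintro ⟨h1, -, h3⟩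
        exact ⟨h1, h3⟩
      · rintro ⟨h1, h3⟩
        refine ⟨h1, ?_, h3⟩
        rintro rfl
        apply h3
        rw [mul_zero, map_zero]
    rw [htarget]
    have hsplitcard := Finset.card_filter_add_card_filter_not
      (s := Af) (p := fun x => Algebra.trace (ZMod p) E (c * x) = 0)
    have harith : (p - 1) * p ^ (a - 1) + p ^ (a - 1) = q := by
      calc (p - 1) * p ^ (a - 1) + p ^ (a - 1) = ((p - 1) + 1) * p ^ (a - 1) := by ring
      _ = p * p ^ (a - 1) := by rw [Nat.sub_add_cancel hp.pos]
      _ = q := hpq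
    simp only [← hf0] at hsplitcard
    simp only [ne_eq]
    omega

lemma card_filter_range_two_mul (P : ℕ → Prop) [DecidablePred P] (m : ℕ) :
    ((Finset.range (2 * m)).filter P).card
      = ((Finset.range m).filter fun j => P (2 * j)).card
        + ((Finset.range m).filter fun j => P (2 * j + 1)).card := by
  induction m with
  | zero => simp
  | succ m ih =>
    have h2 : 2 * (m + 1) = (2 * m + 1) + 1 := by ring
    simp only [Finset.card_filter] at ih ⊢
    rw [h2, Finset.sum_range_succ, Finset.sum_range_succ, Finset.sum_range_succ,
      Finset.sum_range_succ]
    omega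

theorem stmt3 (p a k n : ℕ) (hp : p.Prime) (hp2 : p ≠ 2) (ha : 0 < a)
    (E : Type) [Field E] [Fintype E] [Algebra (ZMod p) E]
    (hE : Fintype.card E = (p ^ a) ^ 2)
    (ω : E) (hω : ∀ x : E, x ≠ 0 → ∃ j : ℕ, ω ^ j = x)
    (hk : 2 * k = p ^ a + 1) (hn : n * k = (p ^ a) ^ 2 - 1) :
    (∀ x ∈ cycCode p E ω k n,
        wt x = 0 ∨ wt x = (p - 1) * p ^ (a - 1) ∨ wt x = 2 * ((p - 1) * p ^ (a - 1))) ∧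
    freq p E ω k n ((p - 1) * p ^ (a - 1)) = 2 * (p ^ a - 1) ∧
    freq p E ω k n (2 * ((p - 1) * p ^ (a - 1))) = (p ^ a - 1) ^ 2 := by
  classical
  haveI : Fact p.Prime := ⟨hp⟩
  haveI : CharP E p := charP_of_injective_algebraMap' (ZMod p) (A := E) p
  have hp3 : 3 ≤ p := by
    have := hp.two_le
    rcases Nat.lt_or_ge p 3 with h | h
    · interval_cases p <;> simp_all
    · exact h
  set q := p ^ a with hq
  set w := (p - 1) * p ^ (a - 1) with hwdef
  have hq3 : 3 ≤ q := by
    calc 3 ≤ p := hp3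
    _ = p ^ 1 := (pow_one p).symm
    _ ≤ q := Nat.pow_le_pow_right hp.pos ha
  have hw0 : 0 < w := Nat.mul_pos (by omega) (pow_pos hp.pos _)
  have hk0 : 0 < k := by omega
  -- n = 2 (q - 1)
  have hqsq : q ^ 2 = (q - 1) * (q + 1) + 1 := by
    obtain ⟨e, he⟩ : ∃ e, q = e + 1 := ⟨q - 1, by omega⟩
    rw [he, Nat.add_sub_cancel]
    ring
  have hn2 : n = 2 * (q - 1) := by
    apply Nat.eq_of_mul_eq_mul_right hk0
    rw [hn]
    have : 2 * (q - 1) * k = (q - 1) * (2 * k) := by ring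
    rw [this, hk]
    omega
  -- ω is nonzero
  have hω0 : ω ≠ 0 := by
    have hcard2 : ({0, 1} : Finset E).card < Fintype.card E := by
      have h1 : ({0, 1} : Finset E).card ≤ 2 :=
        le_trans (Finset.card_insert_le _ _) (by simp)
      have h2 : 9 ≤ Fintype.card E := by
        rw [hE]
        calc 9 = 3 ^ 2 := rfl
        _ ≤ q ^ 2 := Nat.pow_le_pow_left hq3 2
      omega
    have hnonempty : ((univ : Finset E) \ {0, 1}).Nonempty := by
      apply Finset.card_pos.mp
      rw [Finset.card_sdiff_of_subset (Finset.subset_univ _), Finset.card_univ]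
      omega
    obtain ⟨x, hx⟩ := hnonempty
    simp only [Finset.mem_sdiff, Finset.mem_insert, Finset.mem_singleton, not_or] at hx
    obtain ⟨-, hx0, hx1⟩ := hx
    obtain ⟨j, hj⟩ := hω x hx0
    intro h0
    rw [h0] at hj
    rcases Nat.eq_zero_or_pos j with rfl | hjpos
    · rw [pow_zero] at hj
      exact hx1 hj.symm
    · rw [zero_pow hjpos.ne'] at hj
      exact hx0 hj.symm
  -- order of ω
  set u : Eˣ := Units.mk0 ω hω0 with hu
  have hucoe : (u : E) = ω := rfl
  have hupow : ∀ m : ℕ, ((u ^ m : Eˣ) : E) = ω ^ m := by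
    intro m
    rw [← hucoe, Units.val_pow_eq_pow_val]
  have hQ1pos : 0 < q ^ 2 - 1 := by
    have : 9 ≤ q ^ 2 := by
      calc 9 = 3 ^ 2 := rfl
      _ ≤ q ^ 2 := Nat.pow_le_pow_left hq3 2
    omega
  have hω_pow_card : ω ^ (q ^ 2 - 1) = 1 := by
    have := FiniteField.pow_card_sub_one_eq_one ω hω0
    rwa [hE] at this
  have horder : orderOf u = q ^ 2 - 1 := by
    have hdvd : orderOf u ∣ q ^ 2 - 1 := by
      apply orderOf_dvd_of_pow_eq_one
      ext
      rw [hupow, hω_pow_card, Units.val_one]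
    have hle : orderOf u ≤ q ^ 2 - 1 := Nat.le_of_dvd hQ1pos hdvd
    have hge : q ^ 2 - 1 ≤ orderOf u := by
      have hsub : (univ : Finset E).erase 0 ⊆
          (Finset.range (orderOf u)).image (fun m => ω ^ m) := by
        intro x hx
        rw [Finset.mem_erase] at hx
        obtain ⟨j, hj⟩ := hω x hx.1
        rw [Finset.mem_image]
        refine ⟨j % orderOf u, Finset.mem_range.mpr (Nat.mod_lt _ ?_), ?_⟩
        · exact orderOf_pos u
        · rw [← hupow, pow_mod_orderOf, hupow, hj]
      calc q ^ 2 - 1 = ((univ : Finset E).erase 0).card := by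
            rw [Finset.card_erase_of_mem (Finset.mem_univ 0), Finset.card_univ, hE]
      _ ≤ ((Finset.range (orderOf u)).image (fun m => ω ^ m)).card :=
            Finset.card_le_card hsub
      _ ≤ (Finset.range (orderOf u)).card := Finset.card_image_le
      _ = orderOf u := Finset.card_range _
    omega
  -- θ and λ
  set θ : E := ω ^ k with hθ
  set lam : E := θ ^ 2 with hlam
  have hθu : θ = ((u ^ k : Eˣ) : E) := (hupow k).symm
  have hkdvd : k ∣ q ^ 2 - 1 := ⟨n, by rw [← hn]; ring⟩
  have horderθ : orderOf (u ^ k) = n := by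
    rw [orderOf_pow' u hk0.ne', horder, Nat.gcd_eq_right hkdvd]
    rw [← hn, Nat.mul_div_cancel _ hk0]
  have horderlam : orderOf (u ^ k * u ^ k) = q - 1 := by
    have h1 : u ^ k * u ^ k = (u ^ k) ^ 2 := (sq _).symm
    rw [h1, orderOf_pow' _ (by norm_num : (2:ℕ) ≠ 0), horderθ, hn2,
      Nat.gcd_eq_right ⟨q - 1, rfl⟩, Nat.mul_div_cancel_left _ (by norm_num : (0:ℕ) < 2)]
  have hθ0 : θ ≠ 0 := pow_ne_zero _ hω0
  have hlam0 : lam ≠ 0 := pow_ne_zero _ hθ0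
  have hθn : θ ^ n = 1 := by
    have h := pow_orderOf_eq_one (u ^ k)
    rw [horderθ] at h
    have h2 := congrArg (Units.val) h
    rw [hθu]
    simpa using h2
  have hθq1 : θ ^ (q - 1) = -1 := by
    have hsq : θ ^ (q - 1) * θ ^ (q - 1) = 1 := by
      rw [← pow_add]
      have : q - 1 + (q - 1) = n := by omega
      rw [this, hθn]
    rcases mul_self_eq_one_iff.mp hsq with h | h
    · exfalso
      have hdvd : orderOf (u ^ k) ∣ q - 1 := by
        apply orderOf_dvd_of_pow_eq_one
        ext
        rw [Units.val_pow_eq_pow_val, ← hθu, h, Units.val_one]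
      rw [horderθ] at hdvd
      have := Nat.le_of_dvd (by omega) hdvd
      omega
    · exact h
  have hθq : θ ^ q = -θ := by
    have hqe : q = (q - 1) + 1 := by omega
    rw [hqe, pow_succ, hθq1]
    ring
  have hcoelam : ((u ^ k * u ^ k : Eˣ) : E) = lam := by
    rw [Units.val_mul, ← hθu, hlam, sq]
  have hlamq1 : lam ^ (q - 1) = 1 := by
    have h := pow_orderOf_eq_one (u ^ k * u ^ k)
    rw [horderlam] at h
    have h2 := congrArg (Units.val) h
    rw [← hcoelam]
    simpa using h2
  have hlamA : ∀ j : ℕ, (lam ^ j) ^ q = lam ^ j := by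
    intro j
    have hqe : q = (q - 1) + 1 := by omega
    rw [hqe, pow_succ, ← pow_mul, mul_comm j (q-1), pow_mul, hlamq1, one_pow, one_mul]
  -- image of powers of lam is the fixed nonzero elements
  have hinjlam : Set.InjOn (fun m => lam ^ m) (Finset.range (q - 1)) := by
    have hordcoe : orderOf lam = q - 1 := by
      rw [← hcoelam, orderOf_units, horderlam]
    intro i hi j hj hij
    simp only [Finset.coe_range, Set.mem_Iio] at hi hj
    exact pow_injOn_Iio_orderOf (by rwa [Set.mem_Iio, hordcoe]) (by rwa [Set.mem_Iio, hordcoe]) hij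
  have himglam : (Finset.range (q - 1)).image (fun m => lam ^ m)
      = univ.filter (fun x : E => x ^ q = x ∧ x ≠ 0) := by
    apply Finset.eq_of_subset_of_card_le
    · intro x hx
      obtain ⟨j, -, hj⟩ := Finset.mem_image.mp hx
      rw [Finset.mem_filter]
      exact ⟨Finset.mem_univ _, by rw [← hj]; exact hlamA j, by rw [← hj]; exact pow_ne_zero _ hlam0⟩
    · have hcount : (univ.filter (fun x : E => x ^ q = x ∧ x ≠ 0)).card = q - 1 := by
        have hAf := (AB_count p a hp ha E hE).1
        have hsplit : (univ.filter (fun x : E => x ^ q = x ∧ x ≠ 0))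
            = (univ.filter (fun x : E => x ^ q = x)).erase 0 := by
          rw [← Finset.filter_ne']
          rw [Finset.filter_filter]
        rw [hsplit, Finset.card_erase_of_mem, hAf]
        rw [Finset.mem_filter]
        exact ⟨Finset.mem_univ _, by rw [zero_pow (by positivity : q ≠ 0)]⟩
      rw [hcount, Finset.card_image_of_injOn hinjlam, Finset.card_range]
  have himage : ∀ c : E,
      ((Finset.range (q - 1)).filter fun j => Algebra.trace (ZMod p) E (c * lam ^ j) ≠ 0).card
        = if c + c ^ q = 0 then 0 else w := by
    intro c
    rw [← trace_count p a hp ha E hE c]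
    have h1 : ((Finset.range (q - 1)).filter fun j =>
          Algebra.trace (ZMod p) E (c * lam ^ j) ≠ 0).card
        = (((Finset.range (q - 1)).filter fun j =>
          Algebra.trace (ZMod p) E (c * lam ^ j) ≠ 0).image (fun m => lam ^ m)).card := by
      rw [Finset.card_image_of_injOn (hinjlam.mono (by
        intro x hx
        simp only [Finset.coe_filter, Finset.mem_range, Set.mem_setOf_eq, Finset.coe_range,
          Set.mem_Iio] at hx ⊢
        exact hx.1))]
    have h3 : ((Finset.range (q - 1)).filter fun j =>
          Algebra.trace (ZMod p) E (c * lam ^ j) ≠ 0).image (fun m => lam ^ m)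
        = univ.filter (fun x : E => x ^ q = x ∧ x ≠ 0 ∧
            Algebra.trace (ZMod p) E (c * x) ≠ 0) := by
      ext x
      simp only [Finset.mem_image, Finset.mem_filter, Finset.mem_range, Finset.mem_univ,
        true_and]
      constructor
      · rintro ⟨j, ⟨-, htr⟩, rfl⟩
        exact ⟨hlamA j, pow_ne_zero _ hlam0, htr⟩
      · rintro ⟨hx1, hx2, hx3⟩
        have hmem : x ∈ (Finset.range (q - 1)).image (fun m => lam ^ m) := by
          rw [himglam, Finset.mem_filter]
          exact ⟨Finset.mem_univ _, hx1, hx2⟩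
        obtain ⟨j, hj, rfl⟩ := Finset.mem_image.mp hmem
        exact ⟨j, ⟨Finset.mem_range.mp hj, hx3⟩, rfl⟩
    rw [h1, h3]
  -- conditions
  have hconde : ∀ γ : E, (γ + γ ^ q = 0) ↔ (γ ^ q = -γ) := by
    intro γ
    constructor
    · intro h; linear_combination h
    · intro h; linear_combination h
  have hcondo : ∀ γ : E, (γ * θ + (γ * θ) ^ q = 0) ↔ (γ ^ q = γ) := by
    intro γ
    rw [mul_pow, hθq]
    constructor
    · intro h
      have h2 : θ * (γ - γ ^ q) = 0 := by linear_combination h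
      rcases mul_eq_zero.mp h2 with h3 | h3
      · exact absurd h3 hθ0
      · exact (sub_eq_zero.mp h3).symm
    · intro h; rw [h]; ring
  -- the weight formula
  have wt_eq : ∀ γ : E, wt (cycWord p E ω k n γ) =
      (if γ ^ q = -γ then 0 else w) + (if γ ^ q = γ then 0 else w) := by
    intro γ
    have hcard : wt (cycWord p E ω k n γ)
        = ((Finset.range n).filter fun i =>
            Algebra.trace (ZMod p) E (γ * ω ^ (k * i)) ≠ 0).card := by
      unfold wt cycWord
      rw [Finset.card_filter, Finset.card_filter]
      exact Fin.sum_univ_eq_sum_range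
        (fun i => if Algebra.trace (ZMod p) E (γ * ω ^ (k * i)) ≠ 0 then 1 else 0) n
    rw [hcard, hn2, card_filter_range_two_mul]
    have heq : ∀ j : ℕ, γ * ω ^ (k * (2 * j)) = γ * lam ^ j := by
      intro j
      calc γ * ω ^ (k * (2 * j)) = γ * (ω ^ k) ^ (2 * j) := by rw [pow_mul]
      _ = γ * ((ω ^ k) ^ 2) ^ j := by rw [pow_mul]
      _ = γ * lam ^ j := by rw [hlam, hθ]
    have hodd : ∀ j : ℕ, γ * ω ^ (k * (2 * j + 1)) = (γ * θ) * lam ^ j := by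
      intro j
      calc γ * ω ^ (k * (2 * j + 1)) = γ * (ω ^ k) ^ (2 * j + 1) := by rw [pow_mul]
      _ = γ * ((ω ^ k) ^ (2 * j) * (ω ^ k)) := by rw [pow_succ]
      _ = (γ * (ω ^ k)) * ((ω ^ k) ^ 2) ^ j := by
          rw [← pow_mul]
          ring
      _ = (γ * θ) * lam ^ j := by rw [hlam, hθ]
    congr 1
    · have hfeq : ((Finset.range (q - 1)).filter fun j =>
            Algebra.trace (ZMod p) E (γ * ω ^ (k * (2 * j))) ≠ 0)
          = ((Finset.range (q - 1)).filter fun j =>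
            Algebra.trace (ZMod p) E (γ * lam ^ j) ≠ 0) := by
        apply Finset.filter_congr
        intro j _
        rw [heq j]
      rw [hfeq, himage γ, if_congr (hconde γ) rfl rfl]
    · have hfeq : ((Finset.range (q - 1)).filter fun j =>
            Algebra.trace (ZMod p) E (γ * ω ^ (k * (2 * j + 1))) ≠ 0)
          = ((Finset.range (q - 1)).filter fun j =>
            Algebra.trace (ZMod p) E ((γ * θ) * lam ^ j) ≠ 0) := by
        apply Finset.filter_congr
        intro j _
        rw [hodd j]
      rw [hfeq, himage (γ * θ), if_congr (hcondo γ) rfl rfl]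
  -- helper: both conditions force zero
  have hboth : ∀ γ : E, γ ^ q = -γ → γ ^ q = γ → γ = 0 := by
    intro γ h1 h2
    have h4 : γ = -γ := h2.symm.trans h1
    have h5 : (2 : E) * γ = 0 := by linear_combination h4
    have h6 : (2 : E) ≠ 0 := by
      have hnd : ¬ (p ∣ 2) := by
        intro hd
        have := Nat.le_of_dvd (by norm_num) hd
        omega
      intro h20
      apply hnd
      apply (CharP.cast_eq_zero_iff E p 2).mp
      simpa using h20
    rcases mul_eq_zero.mp h5 with h | h
    · exact absurd h h6
    · exact h
  have hzero_mem : (0 : E) ^ q = 0 ∧ (0 : E) ^ q = -(0:E) := by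
    constructor <;> rw [zero_pow (by positivity : q ≠ 0)]
    rw [neg_zero]
  -- injectivity of the encoding
  have hinj : Function.Injective (cycWord p E ω k n) := by
    intro γ δ h
    by_contra hne
    set β := γ - δ with hβ
    have hβ0 : β ≠ 0 := sub_ne_zero.mpr hne
    have hwtβ : wt (cycWord p E ω k n β) = 0 := by
      unfold wt
      rw [Finset.card_eq_zero, Finset.filter_eq_empty_iff]
      intro i _
      simp only [not_not]
      show cycWord p E ω k n β i = 0
      unfold cycWord
      have hco := congrFun h i
      unfold cycWord at hco
      rw [hβ, sub_mul, map_sub, hco, sub_self]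
    rw [wt_eq β] at hwtβ
    have hc1 : β ^ q = -β := by
      by_contra hc
      rw [if_neg hc] at hwtβ
      omega
    have hc2 : β ^ q = β := by
      by_contra hc
      rw [if_neg hc] at hwtβ
      omega
    exact hβ0 (hboth β hc1 hc2)
  -- weight classification
  have hwt_w : ∀ γ : E, (wt (cycWord p E ω k n γ) = w
      ↔ ((γ ^ q = γ ∧ γ ≠ 0) ∨ (γ ^ q = -γ ∧ γ ≠ 0))) := by
    intro γ
    rw [wt_eq γ]
    by_cases h1 : γ ^ q = -γ <;> by_cases h2 : γ ^ q = γ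
    · have h0 : γ = 0 := hboth γ h1 h2
      rw [if_pos h1, if_pos h2]
      constructor
      · intro hcon
        exfalso
        omega
      · rintro (⟨-, hne⟩ | ⟨-, hne⟩) <;> exact absurd h0 hne
    · rw [if_pos h1, if_neg h2]
      constructor
      · intro _
        right
        refine ⟨h1, fun h0 => h2 ?_⟩
        rw [h0]
        exact hzero_mem.1
      · intro _
        omega
    · rw [if_neg h1, if_pos h2]
      constructor
      · intro _
        left
        refine ⟨h2, fun h0 => h1 ?_⟩
        rw [h0]
        exact hzero_mem.2
      · intro _
        omega
    · rw [if_neg h1, if_neg h2]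
      constructor
      · intro hcon
        exfalso
        omega
      · rintro (⟨hh, -⟩ | ⟨hh, -⟩) <;> [exact absurd hh h2; exact absurd hh h1]
  have hwt_2w : ∀ γ : E, (wt (cycWord p E ω k n γ) = 2 * w
      ↔ ¬ (γ ^ q = γ ∨ γ ^ q = -γ)) := by
    intro γ
    rw [wt_eq γ]
    by_cases h1 : γ ^ q = -γ <;> by_cases h2 : γ ^ q = γ
    · rw [if_pos h1, if_pos h2]
      constructor
      · intro hcon; exfalso; omega
      · intro hcon; exact absurd (Or.inl h2) hcon
    · rw [if_pos h1, if_neg h2]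
      constructor
      · intro hcon; exfalso; omega
      · intro hcon; exact absurd (Or.inr h1) hcon
    · rw [if_neg h1, if_pos h2]
      constructor
      · intro hcon; exfalso; omega
      · intro hcon; exact absurd (Or.inl h2) hcon
    · rw [if_neg h1, if_neg h2]
      constructor
      · intro _
        rintro (hh | hh) <;> [exact h2 hh; exact h1 hh]
      · intro _
        omega
  -- cardinalities of the two condition sets
  have hS1 : (univ.filter fun γ : E => γ ^ q = γ ∧ γ ≠ 0).card = q - 1 := by
    have hAf := (AB_count p a hp ha E hE).1
    have hsplit : (univ.filter fun γ : E => γ ^ q = γ ∧ γ ≠ 0)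
        = (univ.filter fun γ : E => γ ^ q = γ).erase 0 := by
      rw [← Finset.filter_ne', Finset.filter_filter]
    rw [hsplit, Finset.card_erase_of_mem, hAf]
    rw [Finset.mem_filter]
    exact ⟨Finset.mem_univ _, hzero_mem.1⟩
  have hS2 : (univ.filter fun γ : E => γ ^ q = -γ ∧ γ ≠ 0).card = q - 1 := by
    have hBf := (AB_count p a hp ha E hE).2
    have hsplit : (univ.filter fun γ : E => γ ^ q = -γ ∧ γ ≠ 0)
        = (univ.filter fun γ : E => γ ^ q = -γ).erase 0 := by
      rw [← Finset.filter_ne', Finset.filter_filter]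
    rw [hsplit, Finset.card_erase_of_mem, hBf]
    rw [Finset.mem_filter]
    exact ⟨Finset.mem_univ _, hzero_mem.2⟩
  refine ⟨?_, ?_, ?_⟩
  · -- all weights are 0, w or 2w
    intro x hx
    simp only [cycCode, Finset.mem_image] at hx
    obtain ⟨γ, -, rfl⟩ := hx
    rw [wt_eq γ]
    by_cases h1 : γ ^ q = -γ <;> by_cases h2 : γ ^ q = γ
    · left
      rw [if_pos h1, if_pos h2]
    · right; left
      rw [if_pos h1, if_neg h2, zero_add]
    · right; left
      rw [if_neg h1, if_pos h2, add_zero]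
    · right; right
      rw [if_neg h1, if_neg h2]
      omega
  · -- frequency of w
    have hstep : freq p E ω k n w
        = (univ.filter fun γ : E => wt (cycWord p E ω k n γ) = w).card := by
      simp only [freq, cycCode]
      rw [Finset.filter_image, Finset.card_image_of_injective _ hinj]
    rw [hstep, Finset.filter_congr (fun γ _ => hwt_w γ), Finset.filter_or,
      Finset.card_union_of_disjoint, hS1, hS2]
    · omega
    · rw [Finset.disjoint_left]
      rintro γ hγ1 hγ2
      rw [Finset.mem_filter] at hγ1 hγ2
      exact hγ1.2.2 (hboth γ hγ2.2.1 hγ1.2.1)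
  · -- frequency of 2w
    have hstep : freq p E ω k n (2 * w)
        = (univ.filter fun γ : E => wt (cycWord p E ω k n γ) = 2 * w).card := by
      simp only [freq, cycCode]
      rw [Finset.filter_image, Finset.card_image_of_injective _ hinj]
    rw [hstep, Finset.filter_congr (fun γ _ => hwt_2w γ)]
    have hsplitcard := Finset.card_filter_add_card_filter_not
      (s := (univ : Finset E)) (p := fun γ : E => γ ^ q = γ ∨ γ ^ q = -γ)
    have hinter : ((univ.filter fun γ : E => γ ^ q = γ) ∩
        (univ.filter fun γ : E => γ ^ q = -γ)) = {0} := by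
      ext x
      simp only [Finset.mem_inter, Finset.mem_filter, Finset.mem_univ, true_and,
        Finset.mem_singleton]
      constructor
      · rintro ⟨h2, h1⟩
        exact hboth x h1 h2
      · rintro rfl
        exact ⟨hzero_mem.1, hzero_mem.2⟩
    have hunion := Finset.card_union_add_card_inter
      (univ.filter fun γ : E => γ ^ q = γ) (univ.filter fun γ : E => γ ^ q = -γ)
    rw [hinter, Finset.card_singleton, (AB_count p a hp ha E hE).1,
      (AB_count p a hp ha E hE).2] at hunion
    rw [← Finset.filter_or] at hunion
    rw [Finset.card_univ, hE] at hsplitcard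
    have harith : (q - 1) ^ 2 + (2 * q - 1) = q ^ 2 := by
      obtain ⟨e, he⟩ : ∃ e, q = e + 1 := ⟨q - 1, by omega⟩
      rw [he]
      simp only [Nat.add_sub_cancel]
      have hr : (e + 1) ^ 2 = e ^ 2 + 2 * e + 1 := by ring
      omega
    omega
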